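/- Assume in addition that A is Noetherian and that A^{1/p^∞} is flat as an A-module. Let 0 ≠ g ∈ A. Then for every A-module M and every nonzero x ∈ M, there exists n ≥ 0 such that g^{1/p^n}·(x ⊗ 1) is nonzero in M ⊗_A A^{1/p^∞}. -/

import Mathlib

open TensorProduct

set_option synthInstance.maxHeartbeats 1000000
set_option maxHeartbeats 1000000

section Aux

variable {p : ℕ} [Fact p.Prime]

universe u v w

/-- Forward direction: if `b ⊗ x = 0` with `B` flat, then `b` lies in the extended
annihilator ideal of `x`. -/
lemma key_forward {A : Type u} [CommRing A] {B : Type v} [CommRing B] [Algebra A B]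
    [Module.Flat A B] {M : Type w} [AddCommGroup M] [Module A M] (x : M) (b : B)
    (h : b ⊗ₜ[A] x = 0) :
    b ∈ Ideal.map (algebraMap A B) (LinearMap.ker (LinearMap.toSpanSingleton A M x)) := by
  set I : Ideal A := LinearMap.ker (LinearMap.toSpanSingleton A M x) with hI
  let ι : I →ₗ[A] A := Submodule.subtype (I : Submodule A A)
  let φ : A →ₗ[A] M := LinearMap.toSpanSingleton A M x
  have hexact : Function.Exact ι φ := by
    rw [LinearMap.exact_iff, Submodule.range_subtype]
  have hT := Module.Flat.lTensor_exact B hexact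
  have h0 : (φ.lTensor B) (b ⊗ₜ[A] (1 : A)) = 0 := by
    simpa [φ, LinearMap.toSpanSingleton_apply] using h
  obtain ⟨t, ht⟩ := (hT _).mp h0
  have hb : b = TensorProduct.rid A B ((ι.lTensor B) t) := by
    rw [ht]; simp
  rw [hb]
  clear hb ht h0 h
  induction t using TensorProduct.induction_on with
  | zero => simp
  | tmul c i =>
      simp only [LinearMap.lTensor_tmul, TensorProduct.rid_tmul, ι, Submodule.subtype_apply]
      rw [Algebra.smul_def]
      exact Ideal.mul_mem_right _ _ (Ideal.mem_map_of_mem _ i.2)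
  | add t₁ t₂ h₁ h₂ =>
      rw [map_add, map_add]
      exact Ideal.add_mem _ h₁ h₂

/-- Converse direction: elements of the extended annihilator kill `x` in the tensor
product. -/
lemma key_backward {A : Type u} [CommRing A] {B : Type v} [CommRing B] [Algebra A B]
    {M : Type w} [AddCommGroup M] [Module A M] (x : M) (J : Ideal A)
    (hJ : ∀ a ∈ J, a • x = 0) (b : B) (hb : b ∈ J.map (algebraMap A B)) :
    b ⊗ₜ[A] x = (0 : B ⊗[A] M) := by
  refine Submodule.span_induction ?_ ?_ ?_ ?_ hb
  · rintro _ ⟨a, ha, rfl⟩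
    have : (algebraMap A B a) ⊗ₜ[A] x = (1 : B) ⊗ₜ[A] (a • x) := by
      rw [← TensorProduct.smul_tmul, Algebra.smul_def, mul_one]
    rw [this, hJ a ha, TensorProduct.tmul_zero]
  · simp
  · intro y z _ _ hy hz
    rw [TensorProduct.add_tmul, hy, hz, add_zero]
  · intro c y _ hy
    rw [smul_eq_mul]
    have : (c * y) ⊗ₜ[A] x = c • (y ⊗ₜ[A] x) := by
      rw [TensorProduct.smul_tmul', smul_eq_mul]
    rw [this, hy, smul_zero]

/-- Taking a large `p`-power moves an element of an extended ideal back into the base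
ring. -/
lemma key_power {A : Type u} [CommRing A] {B : Type v} [CommRing B] [Algebra A B]
    [ExpChar B p]
    (hroots : ∀ b : B, ∃ n : ℕ, b ^ p ^ n ∈ (algebraMap A B).range)
    (J : Ideal A) (b : B) (hb : b ∈ J.map (algebraMap A B)) :
    ∃ (k : ℕ) (a : A), a ∈ J ∧ algebraMap A B a = b ^ p ^ k := by
  refine Submodule.span_induction ?_ ?_ ?_ ?_ hb
  · rintro _ ⟨a, ha, rfl⟩
    exact ⟨0, a, ha, by simp⟩
  · exact ⟨0, 0, J.zero_mem, by simp⟩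
  · rintro y z _ _ ⟨k₁, a₁, ha₁, hfa₁⟩ ⟨k₂, a₂, ha₂, hfa₂⟩
    have e₁ : p ^ k₁ * p ^ (max k₁ k₂ - k₁) = p ^ max k₁ k₂ := by
      rw [← pow_add]; congr 1; omega
    have e₂ : p ^ k₂ * p ^ (max k₁ k₂ - k₂) = p ^ max k₁ k₂ := by
      rw [← pow_add]; congr 1; omega
    refine ⟨max k₁ k₂, a₁ ^ p ^ (max k₁ k₂ - k₁) + a₂ ^ p ^ (max k₁ k₂ - k₂),
      J.add_mem (J.pow_mem_of_mem ha₁ _ (pow_pos (Fact.out : p.Prime).pos _))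
        (J.pow_mem_of_mem ha₂ _ (pow_pos (Fact.out : p.Prime).pos _)), ?_⟩
    rw [add_pow_expChar_pow, map_add, map_pow, map_pow, hfa₁, hfa₂, ← pow_mul, ← pow_mul,
      e₁, e₂]
  · rintro c y _ ⟨k₁, a₁, ha₁, hfa₁⟩
    obtain ⟨k₂, hc⟩ := hroots c
    obtain ⟨a₂, hfa₂⟩ := RingHom.mem_range.mp hc
    have e₁ : p ^ k₁ * p ^ (max k₁ k₂ - k₁) = p ^ max k₁ k₂ := by
      rw [← pow_add]; congr 1; omega
    have e₂ : p ^ k₂ * p ^ (max k₁ k₂ - k₂) = p ^ max k₁ k₂ := by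
      rw [← pow_add]; congr 1; omega
    refine ⟨max k₁ k₂, a₂ ^ p ^ (max k₁ k₂ - k₂) * a₁ ^ p ^ (max k₁ k₂ - k₁),
      J.mul_mem_left _ (J.pow_mem_of_mem ha₁ _ (pow_pos (Fact.out : p.Prime).pos _)),
      ?_⟩
    rw [smul_eq_mul, mul_pow, map_mul, map_pow, map_pow, hfa₁, hfa₂, ← pow_mul, ← pow_mul,
      e₁, e₂]

/-- Scalar action on `1` in a quotient ring. -/
lemma smul_one_quotient {A : Type u} [CommRing A] (J : Ideal A) (a : A) :
    a • (1 : A ⧸ J) = Ideal.Quotient.mk J a := by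
  show a • Submodule.Quotient.mk (1 : A) = _
  rw [← Submodule.Quotient.mk_smul, smul_eq_mul, mul_one]
  rfl

end Aux

/-- Let `A` be a Noetherian domain of characteristic `p`, and let `B` be its perfect closure
`A^{1/p^∞}` (a perfect ring containing `A` such that every element has some `p`-power in
`A`); assume `B` is flat as an `A`-module.  Let `0 ≠ g ∈ A`.  Then for every `A`-module `M`
and every nonzero `x ∈ M`, there exists `n ≥ 0` such that `g^{1/p^n}·(x ⊗ 1)` is nonzero in
`M ⊗_A A^{1/p^∞}`. -/
theorem stmt_8 (p : ℕ) [Fact p.Prime]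
    (A : Type u) [CommRing A] [IsDomain A] [IsNoetherianRing A] [CharP A p]
    (B : Type u) [CommRing B] [CharP B p] [ExpChar B p] [PerfectRing B p]
    [Algebra A B] (hinj : Function.Injective (algebraMap A B))
    (hroots : ∀ b : B, ∃ n : ℕ, b ^ p ^ n ∈ (algebraMap A B).range)
    [Module.Flat A B]
    (g : A) (hg : g ≠ 0)
    (M : Type v) [AddCommGroup M] [Module A M] (x : M) (hx : x ≠ 0) :
    ∃ n : ℕ,
      ((frobeniusEquiv B p).symm)^[n] (algebraMap A B g) • ((1 : B) ⊗ₜ[A] x) ≠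
        (0 : B ⊗[A] M) := by
  by_contra hcon
  push_neg at hcon
  have hp : p.Prime := Fact.out
  set f := algebraMap A B with hf
  set I : Ideal A := LinearMap.ker (LinearMap.toSpanSingleton A M x) with hIdef
  have hone : (1 : A) ∉ I := by
    intro h1
    exact hx (by simpa using (LinearMap.mem_ker.mp h1))
  -- `p^n`-th powers of iterated Frobenius inverses recover the element
  have hiter : ∀ (n : ℕ) (b : B), ((frobeniusEquiv B p).symm)^[n] b ^ p ^ n = b := by
    intro n
    induction n with
    | zero => intro b; simp
    | succ n ih =>
        intro b
        rw [Function.iterate_succ_apply, pow_succ, pow_mul, ih ((frobeniusEquiv B p).symm b),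
          frobeniusEquiv_symm_pow_p]
  -- killing high p-powers implies vanishing
  have hred : ∀ (k : ℕ) (b : B), b ^ p ^ k = 0 → b = 0 := by
    intro k
    induction k with
    | zero => intro b hb; simpa using hb
    | succ k ih =>
        intro b hb
        have : (b ^ p) ^ p ^ k = 0 := by
          rw [← pow_mul, ← pow_succ']; exact hb
        have hbp : b ^ p = 0 := ih _ this
        have : frobeniusEquiv B p b = frobeniusEquiv B p 0 := by
          simpa [frobeniusEquiv_apply, frobenius_def, zero_pow hp.ne_zero] using hbp
        exact (frobeniusEquiv B p).injective this
  -- B has no zero divisors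
  have hdz : ∀ b c : B, b * c = 0 → b = 0 ∨ c = 0 := by
    intro b c hbc
    obtain ⟨k₁, a₁, ha₁⟩ : ∃ k a, f a = b ^ p ^ k := by
      obtain ⟨k, hk⟩ := hroots b; obtain ⟨a, ha⟩ := RingHom.mem_range.mp hk; exact ⟨k, a, ha⟩
    obtain ⟨k₂, a₂, ha₂⟩ : ∃ k a, f a = c ^ p ^ k := by
      obtain ⟨k, hk⟩ := hroots c; obtain ⟨a, ha⟩ := RingHom.mem_range.mp hk; exact ⟨k, a, ha⟩
    have e₁ : p ^ k₁ * p ^ (max k₁ k₂ - k₁) = p ^ max k₁ k₂ := by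
      rw [← pow_add]; congr 1; omega
    have e₂ : p ^ k₂ * p ^ (max k₁ k₂ - k₂) = p ^ max k₁ k₂ := by
      rw [← pow_add]; congr 1; omega
    have hprod : f (a₁ ^ p ^ (max k₁ k₂ - k₁) * a₂ ^ p ^ (max k₁ k₂ - k₂)) = f 0 := by
      rw [map_mul, map_pow, map_pow, ha₁, ha₂, ← pow_mul, ← pow_mul, e₁, e₂, ← mul_pow,
        hbc, map_zero, zero_pow (pow_pos hp.pos _).ne']
    have := hinj hprod
    rcases mul_eq_zero.mp this with h | h
    · left
      refine hred (max k₁ k₂) b ?_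
      have : f (a₁ ^ p ^ (max k₁ k₂ - k₁)) = b ^ p ^ max k₁ k₂ := by
        rw [map_pow, ha₁, ← pow_mul, e₁]
      rw [← this, h, map_zero]
    · right
      refine hred (max k₁ k₂) c ?_
      have : f (a₂ ^ p ^ (max k₁ k₂ - k₂)) = c ^ p ^ max k₁ k₂ := by
        rw [map_pow, ha₂, ← pow_mul, e₂]
      rw [← this, h, map_zero]
  have hfg : f g ≠ 0 := fun h => hg (hinj (by rw [h, map_zero]))
  -- Step 1: each p^n-th root of g lies in I·B
  have hstep1 : ∀ n : ℕ, ((frobeniusEquiv B p).symm)^[n] (f g) ∈ I.map f := by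
    intro n
    apply key_forward
    have := hcon n
    rwa [TensorProduct.smul_tmul', smul_eq_mul, mul_one] at this
  -- Step 2: g lies in I^m·B for every m
  have hstep2 : ∀ m : ℕ, f g ∈ (I ^ m).map f := by
    intro m
    obtain ⟨n, hn⟩ : ∃ n, m ≤ p ^ n := ⟨m, (Nat.lt_pow_self (n := m) hp.one_lt).le⟩
    have h2 : f g ∈ (I.map f) ^ (p ^ n) := by
      rw [← hiter n (f g)]
      exact Ideal.pow_mem_pow (hstep1 n) _
    rw [← Ideal.map_pow] at h2
    exact Ideal.map_mono (Ideal.pow_le_pow_right hn) h2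
  -- Step 3: g lies in (gA ∩ I^m)·B, via flatness
  have hstep3 : ∀ m : ℕ, f g ∈ (Ideal.span {g} ⊓ I ^ m).map f := by
    intro m
    set M' := (A ⧸ Ideal.span {g}) × (A ⧸ I ^ m) with hM'
    have hzero : f g ⊗ₜ[A] ((1 : A ⧸ Ideal.span {g}), (1 : A ⧸ I ^ m)) = (0 : B ⊗[A] M') := by
      have h1 : f g ⊗ₜ[A] (1 : A ⧸ Ideal.span {g}) = 0 := by
        apply key_backward _ (Ideal.span {g}) _ _ (Ideal.mem_map_of_mem f
          (Ideal.mem_span_singleton_self g))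
        intro a ha
        rw [smul_one_quotient, Ideal.Quotient.eq_zero_iff_mem.mpr ha]
      have h2 : f g ⊗ₜ[A] (1 : A ⧸ I ^ m) = 0 := by
        apply key_backward _ (I ^ m) _ _ (hstep2 m)
        intro a ha
        rw [smul_one_quotient, Ideal.Quotient.eq_zero_iff_mem.mpr ha]
      refine (TensorProduct.prodRight A B B (A ⧸ Ideal.span {g}) (A ⧸ I ^ m)).injective ?_
      rw [map_zero (TensorProduct.prodRight A B B (A ⧸ Ideal.span {g}) (A ⧸ I ^ m)),
        TensorProduct.prodRight_tmul, h1, h2]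
      rfl
    have hker := key_forward _ _ hzero
    refine Ideal.map_mono ?_ hker
    intro a ha
    have ha' := LinearMap.mem_ker.mp ha
    rw [LinearMap.toSpanSingleton_apply, Prod.smul_mk, Prod.mk_eq_zero] at ha'
    constructor
    · rw [smul_one_quotient] at ha'
      exact Ideal.Quotient.eq_zero_iff_mem.mp ha'.1
    · rw [smul_one_quotient (I ^ m)] at ha'
      exact Ideal.Quotient.eq_zero_iff_mem.mp ha'.2
  -- Step 4: Artin–Rees
  obtain ⟨k, hk⟩ := Ideal.exists_pow_inf_eq_pow_smul I (Ideal.span {g} : Ideal A)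
  have hAR : Ideal.span {g} ⊓ I ^ (k + 1) ≤ Ideal.span {g} * I := by
    have h := hk (k + 1) (Nat.le_succ k)
    have h1 : k + 1 - k = 1 := by omega
    rw [h1, Ideal.smul_eq_mul, Ideal.smul_eq_mul, Ideal.smul_eq_mul, Ideal.mul_top,
      Ideal.mul_top, pow_one] at h
    calc Ideal.span {g} ⊓ I ^ (k + 1) = I ^ (k + 1) ⊓ Ideal.span {g} := inf_comm _ _
      _ = I * (I ^ k ⊓ Ideal.span {g}) := h
      _ ≤ I * Ideal.span {g} := Ideal.mul_mono_right inf_le_right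
      _ = Ideal.span {g} * I := mul_comm _ _
  have hmem : f g ∈ (Ideal.span {g} * I).map f := Ideal.map_mono hAR (hstep3 (k + 1))
  rw [Ideal.map_mul, Ideal.map_span, Set.image_singleton] at hmem
  obtain ⟨t, ht, hteq⟩ := Ideal.mem_span_singleton_mul.mp hmem
  have h1t : f g * (1 - t) = 0 := by rw [mul_sub, mul_one, hteq, sub_self]
  have ht1 : t = 1 := by
    rcases hdz _ _ h1t with h | h
    · exact absurd h hfg
    · linear_combination -h
  rw [ht1] at ht
  obtain ⟨j, a, haI, hfa⟩ := key_power hroots I 1 ht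
  rw [one_pow, ← map_one f] at hfa
  exact hone (hinj hfa ▸ haI)
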